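/- Let G be a finite group with G/Z(G) isomorphic to the Suzuki group Sz(2) = ⟨a, b : a^5 = b^4 = 1, b^{-1}ab = a^2⟩ of order 20. Then G is an AC-group and its commuting graph is isomorphic to K_{4|Z(G)|} ⊔ 5·K_{3|Z(G)|}. -/

import Mathlib

open Polynomial

/-- The commuting graph of a group: vertices are non-central elements,
adjacent iff distinct and commuting. -/
def commGraph (G : Type*) [Group G] : SimpleGraph {x : G // x ∉ Subgroup.center G} where
  Adj x y := x ≠ y ∧ (x : G) * y = y * x
  symm := ⟨by rintro x y ⟨h1, h2⟩; exact ⟨h1.symm, h2.symm⟩⟩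
  loopless := ⟨by rintro x ⟨h, _⟩; exact h rfl⟩

/-- The characteristic polynomial (over ℝ) of the adjacency matrix of the
commuting graph of a finite group. -/
noncomputable def commCharpoly (G : Type*) [Group G] [Finite G] : Polynomial ℝ := by
  classical
  have : Fintype G := Fintype.ofFinite G
  exact (SimpleGraph.adjMatrix ℝ (commGraph G)).charpoly

/-- The disjoint union of `k` copies of the complete graph on `m` vertices. -/
def completeUnion (k m : ℕ) : SimpleGraph (Fin k × Fin m) where
  Adj x y := x ≠ y ∧ x.1 = y.1
  symm := ⟨by rintro x y ⟨h1, h2⟩; exact ⟨h1.symm, h2.symm⟩⟩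
  loopless := ⟨by rintro x ⟨h, _⟩; exact h rfl⟩

/-- The relators of the presentation `⟨a, b : a⁵ = b⁴ = 1, b⁻¹ a b = a²⟩` of the
Suzuki group `Sz(2)` of order 20. -/
def szRels : Set (FreeGroup (Fin 2)) :=
  {FreeGroup.of 0 ^ 5, FreeGroup.of 1 ^ 4,
    (FreeGroup.of 1)⁻¹ * FreeGroup.of 0 * FreeGroup.of 1 * (FreeGroup.of 0 ^ 2)⁻¹}

/-! ### Auxiliary facts about `Sz(2)` via a concrete permutation model. -/

namespace Sz2Aux

/-- The 5-cycle `x ↦ x + 1` on `ZMod 5`. -/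
def pa : Equiv.Perm (ZMod 5) := ⟨fun x => x + 1, fun x => x - 1, by decide, by decide⟩

/-- The order-4 permutation `x ↦ 3 * x` on `ZMod 5`. -/
def pb : Equiv.Perm (ZMod 5) := ⟨fun x => 3 * x, fun x => 2 * x, by decide, by decide⟩

/-- Normal forms indexed by `Fin 5 × Fin 4`, in the permutation model. -/
def Phi (p : Fin 5 × Fin 4) : Equiv.Perm (ZMod 5) := pa ^ (p.1 : ℕ) * pb ^ (p.2 : ℕ)

/-- The "line" (maximal cyclic subgroup) of a normal form. -/
def lineIdx (p : Fin 5 × Fin 4) : Fin 6 :=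
  if p.2.val = 0 then 0
  else ⟨1 + (p.1.val * (if p.2.val = 1 then 2 else if p.2.val = 2 then 3 else 4)) % 5, by
    have := Nat.mod_lt (p.1.val * (if p.2.val = 1 then 2 else if p.2.val = 2 then 3 else 4))
      (show 0 < 5 by norm_num); omega⟩

/-- A generator for each line. -/
def cRep : Fin 6 → Fin 5 × Fin 4
  | 0 => (1, 0)
  | ⟨f + 1, _⟩ => (⟨3 * f % 5, by omega⟩, 1)

theorem phi_inj : Function.Injective Phi := by decide

theorem phi_eq_one_iff : ∀ p : Fin 5 × Fin 4, Phi p = 1 ↔ p = (0, 0) := by decide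

theorem phi_comm_iff : ∀ p q : Fin 5 × Fin 4, Phi p ≠ 1 → Phi q ≠ 1 →
    (Phi p * Phi q = Phi q * Phi p ↔ lineIdx p = lineIdx q) := by decide

theorem phi_pow : ∀ p : Fin 5 × Fin 4, Phi p ≠ 1 →
    ∃ k, k < 5 ∧ Phi p = Phi (cRep (lineIdx p)) ^ k := by decide

theorem card_line : ∀ i : Fin 6,
    Fintype.card {p : Fin 5 × Fin 4 // p ≠ (0, 0) ∧ lineIdx p = i} = if i = 0 then 4 else 3 := by
  decide

/-! ### The presented group -/

/-- Short name for the presented group. -/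
abbrev P := PresentedGroup szRels

/-- The generator `a`. -/
def A : P := PresentedGroup.of 0
/-- The generator `b`. -/
def B : P := PresentedGroup.of 1

theorem mk_rel_one {r : FreeGroup (Fin 2)} (hr : r ∈ szRels) :
    PresentedGroup.mk szRels r = 1 :=
  (QuotientGroup.eq_one_iff r).2 (Subgroup.subset_normalClosure hr)

theorem relA : A ^ 5 = 1 := by
  have := mk_rel_one (show FreeGroup.of 0 ^ 5 ∈ szRels by left; rfl)
  rwa [map_pow] at this

theorem relB : B ^ 4 = 1 := by
  have := mk_rel_one (show FreeGroup.of 1 ^ 4 ∈ szRels by right; left; rfl)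
  rwa [map_pow] at this

theorem relAB : A * B = B * A ^ 2 := by
  have h := mk_rel_one (show (FreeGroup.of 1)⁻¹ * FreeGroup.of 0 * FreeGroup.of 1 *
      (FreeGroup.of 0 ^ 2)⁻¹ ∈ szRels by right; right; rfl)
  simp only [map_mul, map_inv, map_pow] at h
  have h2 : B⁻¹ * A * B = A ^ 2 := by
    have := mul_eq_one_iff_eq_inv.mp h
    rwa [inv_inv] at this
  calc A * B = B * (B⁻¹ * A * B) := by group
    _ = B * A ^ 2 := by rw [h2]

theorem pow_mul_B : ∀ k : ℕ, A ^ k * B = B * A ^ (2 * k) := by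
  intro k
  induction k with
  | zero => simp
  | succ n ih =>
    have h1 : A ^ (n + 1) * B = A ^ n * (A * B) := by rw [pow_succ, mul_assoc]
    rw [h1, relAB, ← mul_assoc, ih, mul_assoc, ← pow_add]
    ring_nf

theorem BA : B * A = A ^ 3 * B := by
  have h := pow_mul_B 3
  have h6 : A ^ (2 * 3) = A := by
    have h5 : A ^ (2 * 3) = A ^ 5 * A := by rw [← pow_succ]
    rw [h5, relA, one_mul]
  rw [h6] at h
  exact h.symm

theorem B_pow_A : ∀ k : ℕ, B * A ^ k = A ^ (3 * k) * B := by
  intro k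
  induction k with
  | zero => simp
  | succ n ih =>
    have h1 : B * A ^ (n + 1) = B * A ^ n * A := by rw [pow_succ, mul_assoc]
    rw [h1, ih, mul_assoc, BA, ← mul_assoc, ← pow_add]
    ring_nf

theorem Bj_pow_A : ∀ j k : ℕ, B ^ j * A ^ k = A ^ (3 ^ j * k) * B ^ j := by
  intro j
  induction j with
  | zero => intro k; simp
  | succ n ih =>
    intro k
    have h1 : B ^ (n + 1) * A ^ k = B ^ n * (B * A ^ k) := by rw [pow_succ, mul_assoc]
    rw [h1, B_pow_A, ← mul_assoc, ih, mul_assoc, ← pow_succ]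
    congr 2
    ring

/-- Normal form map into the presented group. -/
def ψ (p : Fin 5 × Fin 4) : P := A ^ ((p.1 : ℕ)) * B ^ ((p.2 : ℕ))

/-- The homomorphism to the permutation model. -/
noncomputable def φ : P →* Equiv.Perm (ZMod 5) :=
  PresentedGroup.toGroup (f := ![pa, pb]) (by
    intro r hr
    rcases hr with h | h | h <;> subst h <;>
      simp only [map_mul, map_inv, map_pow, FreeGroup.lift_apply_of] <;> decide)

theorem φA : φ A = pa := by
  exact PresentedGroup.toGroup.of (rels := szRels) _ (x := 0)

theorem φB : φ B = pb := by
  exact PresentedGroup.toGroup.of (rels := szRels) _ (x := 1)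

theorem φψ (p : Fin 5 × Fin 4) : φ (ψ p) = Phi p := by
  simp [ψ, Phi, map_mul, map_pow, φA, φB]

theorem ψ_inj : Function.Injective ψ := by
  intro p q h
  apply phi_inj
  rw [← φψ, ← φψ, h]

theorem ψ_mul (p q : Fin 5 × Fin 4) : ∃ r, ψ r = ψ p * ψ q := by
  obtain ⟨i, j⟩ := p
  obtain ⟨k, m⟩ := q
  refine ⟨(⟨((i : ℕ) + 3 ^ (j : ℕ) * (k : ℕ)) % 5, Nat.mod_lt _ (by norm_num)⟩,
    ⟨((j : ℕ) + (m : ℕ)) % 4, Nat.mod_lt _ (by norm_num)⟩), ?_⟩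
  show A ^ (((i : ℕ) + 3 ^ (j : ℕ) * (k : ℕ)) % 5) * B ^ (((j : ℕ) + (m : ℕ)) % 4) = _
  rw [← pow_eq_pow_mod _ relA, ← pow_eq_pow_mod _ relB]
  show _ = A ^ (i : ℕ) * B ^ (j : ℕ) * (A ^ (k : ℕ) * B ^ (m : ℕ))
  rw [pow_add, pow_add]
  calc A ^ (i : ℕ) * A ^ (3 ^ (j : ℕ) * (k : ℕ)) * (B ^ (j : ℕ) * B ^ (m : ℕ))
      = A ^ (i : ℕ) * (A ^ (3 ^ (j : ℕ) * (k : ℕ)) * B ^ (j : ℕ)) * B ^ (m : ℕ) := by group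
    _ = A ^ (i : ℕ) * (B ^ (j : ℕ) * A ^ (k : ℕ)) * B ^ (m : ℕ) := by rw [← Bj_pow_A]
    _ = A ^ (i : ℕ) * B ^ (j : ℕ) * (A ^ (k : ℕ) * B ^ (m : ℕ)) := by group

theorem ψ_surj : Function.Surjective ψ := by
  have hrange : Set.range (PresentedGroup.of : Fin 2 → P) = {A, B} := by
    ext x
    simp only [Set.mem_range, Set.mem_insert_iff, Set.mem_singleton_iff]
    constructor
    · rintro ⟨i, rfl⟩
      fin_cases i
      · left; rfl
      · right; rfl
    · rintro (rfl | rfl)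
      · exact ⟨0, rfl⟩
      · exact ⟨1, rfl⟩
  have hS : Subgroup.closure ({A, B} : Set P) = ⊤ := by
    rw [← hrange]; exact PresentedGroup.closure_range_of szRels
  have hAinv : A⁻¹ = A ^ 4 := by
    have h : A * A ^ 4 = 1 := by rw [← pow_succ']; exact relA
    exact inv_eq_of_mul_eq_one_right h
  have hBinv : B⁻¹ = B ^ 3 := by
    have h : B * B ^ 3 = 1 := by rw [← pow_succ']; exact relB
    exact inv_eq_of_mul_eq_one_right h
  have hmono : Submonoid.closure ({A, B} : Set P) = ⊤ := by
    have h1 := Subgroup.closure_toSubmonoid ({A, B} : Set P)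
    have hsub : (({A, B} : Set P)⁻¹) ⊆ ↑(Submonoid.closure ({A, B} : Set P)) := by
      intro x hx
      simp only [Set.mem_inv, Set.mem_insert_iff, Set.mem_singleton_iff] at hx
      rcases hx with hx | hx
      · have hxe : x = A⁻¹ := by rw [← hx, inv_inv]
        rw [hxe, hAinv]
        exact pow_mem (Submonoid.subset_closure (by left; rfl)) 4
      · have hxe : x = B⁻¹ := by rw [← hx, inv_inv]
        rw [hxe, hBinv]
        exact pow_mem (Submonoid.subset_closure (by right; rfl)) 3
    have h2 : Submonoid.closure (({A, B} : Set P) ∪ ({A, B} : Set P)⁻¹)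
        = Submonoid.closure ({A, B} : Set P) := by
      apply le_antisymm
      · exact Submonoid.closure_le.2 (Set.union_subset Submonoid.subset_closure hsub)
      · exact Submonoid.closure_mono Set.subset_union_left
    have h3 : (Subgroup.closure ({A, B} : Set P)).toSubmonoid = ⊤ := by
      rw [hS]; rfl
    rw [← h2, ← h1, h3]
  intro x
  have hx : x ∈ Submonoid.closure ({A, B} : Set P) := by rw [hmono]; trivial
  induction hx using Submonoid.closure_induction with
  | mem y hy =>
    rcases hy with hy | hy
    · exact ⟨(1, 0), by simp [ψ, hy]⟩
    · refine ⟨(0, 1), ?_⟩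
      simp only [Set.mem_singleton_iff] at hy
      simp [ψ, hy]
  | one => exact ⟨(0, 0), by simp [ψ]⟩
  | mul y z _ _ hy hz =>
    obtain ⟨p, rfl⟩ := hy
    obtain ⟨q, rfl⟩ := hz
    exact ψ_mul p q

theorem φ_inj : Function.Injective φ := by
  intro s t hst
  obtain ⟨p, rfl⟩ := ψ_surj s
  obtain ⟨q, rfl⟩ := ψ_surj t
  rw [φψ, φψ] at hst
  rw [phi_inj hst]

theorem ψ_eq_one_iff (p : Fin 5 × Fin 4) : ψ p = 1 ↔ p = (0, 0) := by
  rw [← phi_eq_one_iff, ← φψ]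
  constructor
  · intro h; rw [h, map_one]
  · intro h; exact φ_inj (by rw [h, map_one])

/-- The normal-form equivalence. -/
noncomputable def E : Fin 5 × Fin 4 ≃ P := Equiv.ofBijective ψ ⟨ψ_inj, ψ_surj⟩

theorem ψ_Esymm (t : P) : ψ (E.symm t) = t := E.apply_symm_apply t

/-- The line of an element of the presented group. -/
noncomputable def ℓ (t : P) : Fin 6 := lineIdx (E.symm t)

theorem ne_one_iff (t : P) : t ≠ 1 ↔ Phi (E.symm t) ≠ 1 := by
  have h1 : t = 1 ↔ Phi (E.symm t) = 1 := by
    rw [phi_eq_one_iff, ← ψ_eq_one_iff, ψ_Esymm]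
  exact not_congr h1

theorem comm_iff_line (s t : P) (hs : s ≠ 1) (ht : t ≠ 1) :
    (s * t = t * s ↔ ℓ s = ℓ t) := by
  have hs' := (ne_one_iff s).1 hs
  have ht' := (ne_one_iff t).1 ht
  have key := phi_comm_iff (E.symm s) (E.symm t) hs' ht'
  show s * t = t * s ↔ lineIdx (E.symm s) = lineIdx (E.symm t)
  rw [← key]
  conv_lhs => rw [← ψ_Esymm s, ← ψ_Esymm t]
  constructor
  · intro h
    have := congrArg φ h
    simpa only [map_mul, φψ] using this
  · intro h
    apply φ_inj
    simpa only [map_mul, φψ] using h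

theorem line_pow (t : P) (ht : t ≠ 1) : ∃ k : ℕ, t = ψ (cRep (ℓ t)) ^ k := by
  obtain ⟨k, _, hk⟩ := phi_pow (E.symm t) ((ne_one_iff t).1 ht)
  refine ⟨k, ?_⟩
  apply φ_inj
  rw [map_pow, φψ]
  show φ t = Phi (cRep (lineIdx (E.symm t))) ^ k
  rw [← hk, ← φψ, ψ_Esymm]

theorem card_line' (i : Fin 6) :
    Nat.card {t : P // t ≠ 1 ∧ ℓ t = i} = if i = 0 then 4 else 3 := by
  have eqv : {t : P // t ≠ 1 ∧ ℓ t = i} ≃ {p : Fin 5 × Fin 4 // p ≠ (0, 0) ∧ lineIdx p = i} := by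
    refine Equiv.subtypeEquiv E.symm (fun t => ?_)
    constructor
    · rintro ⟨h1, h2⟩
      refine ⟨?_, h2⟩
      intro h0
      exact h1 (by rw [← ψ_Esymm t, ψ_eq_one_iff]; exact h0)
    · rintro ⟨h1, h2⟩
      refine ⟨?_, h2⟩
      intro h0
      exact h1 ((ψ_eq_one_iff _).1 (by rw [ψ_Esymm, h0]))
  rw [Nat.card_congr eqv, Nat.card_eq_fintype_card, card_line]

end Sz2Aux

/-! ### Generic graph plumbing -/

/-- The labelling map on the model graph. -/
def gmap (n m : ℕ) : Fin n ⊕ Fin 5 × Fin m → Fin 6 :=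
  Sum.elim (fun _ => 0) (fun p => p.1.succ)

theorem gmap_adj (n m : ℕ) (w w' : Fin n ⊕ Fin 5 × Fin m) :
    ((⊤ : SimpleGraph (Fin n)) ⊕g completeUnion 5 m).Adj w w'
      ↔ (w ≠ w' ∧ gmap n m w = gmap n m w') := by
  rcases w with a | p <;> rcases w' with b | q
  · show a ≠ b ↔ _
    constructor
    · intro hne
      exact ⟨fun hc => hne (by injection hc), rfl⟩
    · rintro ⟨hne, -⟩ hab
      exact hne (by rw [hab])
  · constructor
    · intro habs
      exact (Bool.false_ne_true habs).elim
    · rintro ⟨-, h0⟩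
      exact (Fin.succ_ne_zero q.1 ((show (0 : Fin 6) = q.1.succ from h0)).symm).elim
  · constructor
    · intro habs
      exact (Bool.false_ne_true habs).elim
    · rintro ⟨-, h0⟩
      exact (Fin.succ_ne_zero p.1 (show p.1.succ = 0 from h0)).elim
  · show (p ≠ q ∧ p.1 = q.1) ↔ _
    constructor
    · rintro ⟨hne, h1⟩
      refine ⟨fun hc => hne (by injection hc), ?_⟩
      show p.1.succ = q.1.succ
      rw [h1]
    · rintro ⟨hne, h1⟩
      refine ⟨fun hc => hne (by rw [hc]), ?_⟩
      exact Fin.succ_injective _ (show p.1.succ = q.1.succ from h1)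

theorem gmap_fiber_card (n m : ℕ) (i : Fin 6) :
    Nat.card {w : Fin n ⊕ Fin 5 × Fin m // gmap n m w = i}
      = if i = 0 then n else m := by
  have eqS : {w : Fin n ⊕ Fin 5 × Fin m // gmap n m w = i}
      ≃ {a : Fin n // gmap n m (Sum.inl a) = i} ⊕ {b : Fin 5 × Fin m // gmap n m (Sum.inr b) = i} :=
    Equiv.subtypeSum
  rw [Nat.card_congr eqS, Nat.card_sum]
  by_cases hi : i = 0
  · subst hi
    have e1 : {a : Fin n // gmap n m (Sum.inl a) = 0} ≃ Fin n :=
      Equiv.subtypeUnivEquiv (fun _ => rfl)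
    haveI : IsEmpty {b : Fin 5 × Fin m // gmap n m (Sum.inr b) = 0} :=
      ⟨fun b => Fin.succ_ne_zero b.1.1 b.2⟩
    rw [Nat.card_congr e1,
      show Nat.card {b : Fin 5 × Fin m // gmap n m (Sum.inr b) = 0} = 0 from Nat.card_of_isEmpty]
    simp
  · haveI : IsEmpty {a : Fin n // gmap n m (Sum.inl a) = i} :=
      ⟨fun a => hi a.2.symm⟩
    have e2 : {b : Fin 5 × Fin m // gmap n m (Sum.inr b) = i}
        ≃ {j : Fin 5 // j.succ = i} × Fin m :=
      { toFun := fun b => (⟨b.1.1, b.2⟩, b.1.2)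
        invFun := fun c => ⟨(c.1.1, c.2), c.1.2⟩
        left_inv := fun b => rfl
        right_inv := fun c => rfl }
    have hival : (i : ℕ) ≠ 0 := fun h0 => hi (Fin.ext h0)
    haveI : Unique {j : Fin 5 // j.succ = i} := by
      have hlt : (i : ℕ) - 1 < 5 := by omega
      refine ⟨⟨⟨⟨(i : ℕ) - 1, hlt⟩, ?_⟩⟩, ?_⟩
      · apply Fin.ext
        show ((i : ℕ) - 1) + 1 = (i : ℕ)
        omega
      · rintro ⟨j, hj⟩
        apply Subtype.ext
        apply Fin.succ_injective
        rw [hj]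
        apply Fin.ext
        show (i : ℕ) = ((i : ℕ) - 1) + 1
        omega
    rw [Nat.card_of_isEmpty, Nat.card_congr e2, Nat.card_prod, Nat.card_unique]
    simp [hi]

/-- Matching fibers over `Fin 6` gives a label-preserving equivalence. -/
theorem label_equiv {α β : Type*} [Finite α] [Finite β] (f : α → Fin 6) (g : β → Fin 6)
    (h : ∀ i, Nat.card {a // f a = i} = Nat.card {b // g b = i}) :
    ∃ E : α ≃ β, ∀ a, g (E a) = f a := by
  classical
  have F : ∀ i, {a // f a = i} ≃ {b // g b = i} := fun i => Classical.choice
    (Finite.card_eq.mp (h i))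
  refine ⟨(Equiv.sigmaFiberEquiv f).symm.trans
    ((Equiv.sigmaCongrRight F).trans (Equiv.sigmaFiberEquiv g)), fun a => ?_⟩
  exact (F (f a) ⟨a, rfl⟩).2

/-- If `G` is a finite group with `G/Z(G) ≅ Sz(2)`, then `G` is an AC-group and its
commuting graph is isomorphic to `K_{4|Z(G)|} ⊔ 5·K_{3|Z(G)|}`. -/
theorem commGraph_of_quotient_center_iso_Sz2
    (G : Type*) [Group G] [Finite G]
    (h : Nonempty ((G ⧸ Subgroup.center G) ≃* PresentedGroup szRels)) :
    (∀ x : G, x ∉ Subgroup.center G →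
      ∀ y ∈ Subgroup.centralizer ({x} : Set G), ∀ z ∈ Subgroup.centralizer ({x} : Set G),
        y * z = z * y) ∧
    Nonempty (commGraph G ≃g
      ((⊤ : SimpleGraph (Fin (4 * Nat.card (Subgroup.center G))))
        ⊕g completeUnion 5 (3 * Nat.card (Subgroup.center G)))) := by
  classical
  open Sz2Aux in
  obtain ⟨e⟩ := h
  have hne1 : ∀ x : G, x ∉ Subgroup.center G → e (↑x) ≠ 1 := by
    intro x hx h1
    have h2 : ((x : G ⧸ Subgroup.center G)) = 1 := e.injective (by rw [h1, map_one])
    exact hx ((QuotientGroup.eq_one_iff x).1 h2)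
  have central_comm : ∀ z ∈ Subgroup.center G, ∀ g : G, Commute g z := by
    intro z hz g
    exact Subgroup.mem_center_iff.1 hz g
  -- the key commuting criterion
  have comm_iff : ∀ x y : G, x ∉ Subgroup.center G → y ∉ Subgroup.center G →
      (x * y = y * x ↔ Sz2Aux.ℓ (e (↑x)) = Sz2Aux.ℓ (e (↑y))) := by
    intro x y hx hy
    constructor
    · intro hxy
      have hc : e (↑x) * e (↑y) = e (↑y) * e (↑x) := by
        rw [← map_mul, ← map_mul]
        congr 1
        rw [← QuotientGroup.mk_mul, ← QuotientGroup.mk_mul, hxy]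
      exact (comm_iff_line _ _ (hne1 x hx) (hne1 y hy)).1 hc
    · intro hL
      obtain ⟨k, hk⟩ := line_pow (e (↑x)) (hne1 x hx)
      obtain ⟨m, hm⟩ := line_pow (e (↑y)) (hne1 y hy)
      rw [hL] at hk
      set C := ψ (cRep (Sz2Aux.ℓ (e (↑y)))) with hC
      obtain ⟨w, hw⟩ := QuotientGroup.mk_surjective (e.symm C)
      have hew : e (↑w) = C := by rw [hw, MulEquiv.apply_symm_apply]
      have hxw : ((x : G ⧸ Subgroup.center G)) = ((w ^ k : G) : G ⧸ Subgroup.center G) := by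
        apply e.injective
        rw [hk, QuotientGroup.mk_pow, map_pow, hew]
      have hyw : ((y : G ⧸ Subgroup.center G)) = ((w ^ m : G) : G ⧸ Subgroup.center G) := by
        apply e.injective
        rw [hm, QuotientGroup.mk_pow, map_pow, hew]
      have hcx : x⁻¹ * w ^ k ∈ Subgroup.center G := QuotientGroup.eq.1 hxw
      have hcy : y⁻¹ * w ^ m ∈ Subgroup.center G := QuotientGroup.eq.1 hyw
      have hx' : x = w ^ k * (x⁻¹ * w ^ k)⁻¹ := by group
      have hy' : y = w ^ m * (y⁻¹ * w ^ m)⁻¹ := by group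
      have hcomm : Commute (w ^ k * (x⁻¹ * w ^ k)⁻¹) (w ^ m * (y⁻¹ * w ^ m)⁻¹) := by
        apply Commute.mul_right
        · apply Commute.mul_left
          · exact Commute.pow_pow_self w k m
          · exact (central_comm _ (Subgroup.inv_mem _ hcx) (w ^ m)).symm
        · exact central_comm _ (Subgroup.inv_mem _ hcy) _
      rw [hx', hy']
      exact hcomm
  constructor
  · -- AC group
    intro x hx y hy z hz
    have hxy : x * y = y * x := Subgroup.mem_centralizer_iff.1 hy x rfl
    have hxz : x * z = z * x := Subgroup.mem_centralizer_iff.1 hz x rfl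
    by_cases hyZ : y ∈ Subgroup.center G
    · exact (Subgroup.mem_center_iff.1 hyZ z).symm
    by_cases hzZ : z ∈ Subgroup.center G
    · exact Subgroup.mem_center_iff.1 hzZ y
    have h1 := (comm_iff x y hx hyZ).1 hxy
    have h2 := (comm_iff x z hx hzZ).1 hxz
    exact (comm_iff y z hyZ hzZ).2 (h1.symm.trans h2)
  · -- the graph isomorphism
    set nZ := Nat.card (Subgroup.center G) with hnZ
    have fiberL : ∀ i : Fin 6,
        Nat.card {v : {x : G // x ∉ Subgroup.center G} // Sz2Aux.ℓ (e (↑(v.1))) = i}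
          = nZ * (if i = 0 then 4 else 3) := by
      intro i
      set S : Set (G ⧸ Subgroup.center G) := {q | e q ≠ 1 ∧ Sz2Aux.ℓ (e q) = i} with hS
      have eq1 : {v : {x : G // x ∉ Subgroup.center G} // Sz2Aux.ℓ (e (↑(v.1))) = i}
          ≃ (QuotientGroup.mk ⁻¹' S : Set G) :=
        { toFun := fun v => ⟨v.1.1, hne1 _ v.1.2, v.2⟩
          invFun := fun x => ⟨⟨x.1, fun hm => x.2.1 (by
            rw [(QuotientGroup.eq_one_iff _).2 hm, map_one])⟩, x.2.2⟩
          left_inv := fun v => rfl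
          right_inv := fun x => rfl }
      have eq2 := QuotientGroup.preimageMkEquivSubgroupProdSet (Subgroup.center G) S
      have eq3 : S ≃ {t : Sz2Aux.P // t ≠ 1 ∧ Sz2Aux.ℓ t = i} :=
        Equiv.subtypeEquiv e.toEquiv (fun q => Iff.rfl)
      rw [Nat.card_congr eq1, Nat.card_congr eq2, Nat.card_prod, Nat.card_congr eq3,
        card_line' i]
    have fiberR : ∀ i : Fin 6,
        Nat.card {w : Fin (4 * nZ) ⊕ Fin 5 × Fin (3 * nZ) // gmap (4 * nZ) (3 * nZ) w = i}
          = nZ * (if i = 0 then 4 else 3) := by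
      intro i
      rw [gmap_fiber_card]
      by_cases hi : i = 0 <;> simp [hi, Nat.mul_comm]
    obtain ⟨E2, hE2⟩ := label_equiv (fun v : {x : G // x ∉ Subgroup.center G} =>
        Sz2Aux.ℓ (e (↑(v.1)))) (gmap (4 * nZ) (3 * nZ))
      (fun i => (fiberL i).trans (fiberR i).symm)
    refine ⟨⟨E2, ?_⟩⟩
    intro u v
    rw [gmap_adj]
    constructor
    · rintro ⟨hne, hgg⟩
      refine ⟨fun hc => hne (by rw [hc]), ?_⟩
      rw [hE2, hE2] at hgg
      exact (comm_iff u.1 v.1 u.2 v.2).2 hgg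
    · rintro ⟨hne, hcm⟩
      refine ⟨fun hc => hne (E2.injective hc), ?_⟩
      rw [hE2, hE2]
      exact (comm_iff u.1 v.1 u.2 v.2).1 hcm
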